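/- In the $n$-hop line network with mutually independent renewal processes $N^{(0,0)}$ (source updates) and $N^{(i,i+1)}$ for $0 \leq i \leq n-1$ (links), define $\Delta_0(t) = 0$ and $\Delta_i(t) = A^{(n-i,n-i+1)}\big(t - \sum_{j=0}^{i-1}\Delta_j(t)\big)$ for $1 \leq i \leq n$. Then the instantaneous version age at node $n$ satisfies $X_n(t) = N^{(0,0)}(t) - N^{(0,0)}\big(t - \sum_{j=1}^{n}\Delta_j(t)\big)$. -/

import Mathlib

open MeasureTheory ProbabilityTheory Filter

structure RenewalProcess (Ω : Type*) [MeasureSpace Ω] : Type _ where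
  Y : ℕ → Ω → ℝ
  meas : ∀ n, Measurable (Y n)
  indep : iIndepFun Y ℙ
  ident : ∀ n, IdentDistrib (Y n) (Y 0) ℙ ℙ
  pos : ∀ n, ∀ᵐ ω ∂(ℙ : Measure Ω), 0 < Y n ω

namespace RenewalProcess

variable {Ω : Type*} [MeasureSpace Ω] (R : RenewalProcess Ω)

/-- Renewal epochs. -/
def T (n : ℕ) (ω : Ω) : ℝ := ∑ k ∈ Finset.range n, R.Y k ω

/-- Counting process. -/
noncomputable def N (t : ℝ) (ω : Ω) : ℕ := sSup {n : ℕ | R.T n ω ≤ t}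

/-- Backward recurrence time. -/
noncomputable def A (t : ℝ) (ω : Ω) : ℝ := t - R.T (R.N t ω) ω

/-- Forward recurrence time. -/
noncomputable def B (t : ℝ) (ω : Ω) : ℝ := R.T (R.N t ω + 1) ω - t

/-- Mean inter-renewal time. -/
noncomputable def mean : ℝ := ∫ ω, R.Y 0 ω ∂ℙ

def FiniteFirstMoment : Prop := Integrable (R.Y 0) ℙ

def FiniteSecondMoment : Prop := Integrable (fun ω => (R.Y 0 ω) ^ 2) ℙ

/-- The inter-renewal distribution is non-arithmetic: it is not supported
on any lattice `{0, d, 2d, …}` with `d > 0`. -/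
def NonArithmetic : Prop :=
  ¬ ∃ d > (0 : ℝ), ∀ᵐ ω ∂(ℙ : Measure Ω), ∃ n : ℕ, R.Y 0 ω = n * d

/-- The sigma-algebra generated by the renewal process. -/
def sigma : MeasurableSpace Ω := ⨆ n, MeasurableSpace.comap (R.Y n) inferInstance

end RenewalProcess

/-- Sigma-algebra generated by a continuous-time process. -/
def procSigma {Ω : Type*} (S : ℝ → Ω → ℝ) : MeasurableSpace Ω :=
  ⨆ t, MeasurableSpace.comap (S t) inferInstance

/-- n-hop line network, telescoping identity: with
`Δ₀(t) = 0` and `Δᵢ(t) = A⁽ⁿ⁻ⁱ'ⁿ⁻ⁱ⁺¹⁾(t - ∑_{j<i} Δⱼ(t))`, the version age at node `n`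
satisfies `Xₙ(t) = N⁽⁰⁰⁾(t) - N⁽⁰⁰⁾(t - ∑_{j=1}^n Δⱼ(t))`. -/
theorem n_hop_version_age_telescoping {Ω : Type*} [MeasureSpace Ω]
    [IsProbabilityMeasure (ℙ : Measure Ω)]
    {n : ℕ} (hn : 1 ≤ n)
    (R0 : RenewalProcess Ω) (Rl : Fin n → RenewalProcess Ω)
    (hindep : iIndep (fun k : Option (Fin n) =>
      Option.rec R0.sigma (fun i => (Rl i).sigma) k) ℙ)
    (X : ℕ → ℝ → Ω → ℝ)
    (hX0 : ∀ s ω, X 0 s ω = 0)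
    (hXrec : ∀ i : ℕ, ∀ h : i < n, ∀ s ω, X (i + 1) s ω =
      (R0.N s ω : ℝ) - (R0.N (s - (Rl ⟨i, h⟩).A s ω) ω : ℝ)
        + X i (s - (Rl ⟨i, h⟩).A s ω) ω)
    (Δ : ℕ → ℝ → Ω → ℝ)
    (hΔ0 : ∀ t ω, Δ 0 t ω = 0)
    (hΔrec : ∀ i : ℕ, ∀ h1 : 1 ≤ i, ∀ h2 : i ≤ n, ∀ t ω, Δ i t ω =
      (Rl ⟨n - i, by omega⟩).A (t - ∑ j ∈ Finset.range i, Δ j t ω) ω)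
     :
    ∀ t ω, X n t ω =
      (R0.N t ω : ℝ) - (R0.N (t - ∑ j ∈ Finset.Icc 1 n, Δ j t ω) ω : ℝ) := by
  intro t ω
  have key : ∀ i, i ≤ n → X n t ω =
      (R0.N t ω : ℝ) - (R0.N (t - ∑ j ∈ Finset.range (i + 1), Δ j t ω) ω : ℝ)
        + X (n - i) (t - ∑ j ∈ Finset.range (i + 1), Δ j t ω) ω := by
    intro i
    induction i with
    | zero =>
      intro _
      simp [hΔ0]
    | succ i ih =>
      intro h
      have hin : i < n := h
      have ihh := ih (le_of_lt hin)
      set S := ∑ j ∈ Finset.range (i + 1), Δ j t ω with hS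
      have hni : n - i = (n - (i + 1)) + 1 := by omega
      have hΔ : Δ (i + 1) t ω =
          (Rl ⟨n - (i + 1), by omega⟩).A (t - S) ω := hΔrec (i + 1) (by omega) h t ω
      have hrec := hXrec (n - (i + 1)) (by omega) (t - S) ω
      have hsum : ∑ j ∈ Finset.range (i + 2), Δ j t ω = S + Δ (i + 1) t ω := by
        rw [Finset.sum_range_succ]
      have hrec' : X (n - i) (t - S) ω =
          (R0.N (t - S) ω : ℝ)
            - (R0.N (t - S - (Rl ⟨n - (i + 1), by omega⟩).A (t - S) ω) ω : ℝ)
            + X (n - (i + 1)) (t - S - (Rl ⟨n - (i + 1), by omega⟩).A (t - S) ω) ω := by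
        conv_lhs => rw [hni]
        exact hrec
      rw [hsum, hΔ, ihh, hrec', sub_add_eq_sub_sub t S]
      ring
  have hfin := key n le_rfl
  rw [Nat.sub_self, hX0, add_zero] at hfin
  have hset : Finset.range (n + 1) = insert 0 (Finset.Icc 1 n) := by
    ext j; simp; omega
  rw [hset, Finset.sum_insert (by simp), hΔ0, zero_add] at hfin
  exact hfin
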